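/- Let k be an algebraically closed field of characteristic 2 and b ∈ k with b³ = 1 and b ≠ 1. Let K ≤ GL₆(k) be the subgroup generated by the permutation matrices of (1 4)(2 3)(5 6), (1 3 5)(2 4 6) and (2 4 6) together with the diagonal matrix diag(b, 1, b⁻¹, 1, 1, 1). Then the natural 6-dimensional module k⁶ is a simple (irreducible) K-module: its only K-invariant subspaces are 0 and k⁶. -/

import Mathlib

open Matrix

/-- The invertible permutation matrix associated to a permutation, as an element of `GL n k`. -/
noncomputable def permGL (k : Type*) [Field k] {n : Type*} [DecidableEq n] [Fintype n]
    (s : Equiv.Perm n) : Matrix.GeneralLinearGroup n k :=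
  Matrix.GeneralLinearGroup.mkOfDetNeZero (s.permMatrix k)
    (by
      rw [Matrix.det_permutation]
      rcases Int.units_eq_one_or (Equiv.Perm.sign s) with h | h <;> simp [h])

/-- The invertible diagonal matrix with nonzero diagonal entries `d`, as an element of `GL n k`. -/
noncomputable def diagGL (k : Type*) [Field k] {n : Type*} [DecidableEq n] [Fintype n]
    (d : n → k) (h : ∀ i, d i ≠ 0) : Matrix.GeneralLinearGroup n k :=
  Matrix.GeneralLinearGroup.mkOfDetNeZero (Matrix.diagonal d)
    (by rw [Matrix.det_diagonal]; exact Finset.prod_ne_zero_iff.mpr fun i _ => h i)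

lemma permGL_mulVec (k : Type*) [Field k] {n : Type*} [DecidableEq n] [Fintype n]
    (s : Equiv.Perm n) (v : n → k) :
    ((permGL k s : Matrix n n k)).mulVec v = fun i => v (s i) := by
  have hc : (permGL k s : Matrix n n k) = s.permMatrix k := rfl
  funext i
  rw [hc]
  simp [Matrix.mulVec, dotProduct, Equiv.Perm.permMatrix,
    PEquiv.toMatrix_toPEquiv_apply, Matrix.one_apply, Equiv.toPEquiv_apply]

lemma diagGL_mulVec (k : Type*) [Field k] {n : Type*} [DecidableEq n] [Fintype n]
    (d : n → k) (h : ∀ i, d i ≠ 0) (v : n → k) :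
    ((diagGL k d h : Matrix n n k)).mulVec v = fun i => d i * v i := by
  have hc : (diagGL k d h : Matrix n n k) = Matrix.diagonal d := rfl
  funext i
  rw [hc, Matrix.mulVec_diagonal]

/-- The natural 6-dimensional module `k⁶` for the subgroup `K ≤ GL₆(k)` generated by the
given permutation matrices and the diagonal matrix is simple: its only K-invariant subspaces are 0 and k⁶. -/
theorem stmt_6 (k : Type*) [Field k] [IsAlgClosed k] [CharP k 2]
    (b : k) (hb3 : b ^ 3 = 1) (hb1 : b ≠ 1)
    (K : Subgroup (Matrix.GeneralLinearGroup (Fin 6) k))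
    (hK : K = Subgroup.closure
      { permGL k (c[(0 : Fin 6), 3] * c[(1 : Fin 6), 2] * c[(4 : Fin 6), 5]),
        permGL k (c[(0 : Fin 6), 2, 4] * c[(1 : Fin 6), 3, 5]),
        permGL k (c[(1 : Fin 6), 3, 5]),
        diagGL k ![b, 1, b⁻¹, 1, 1, 1] (by
          have hb0 : b ≠ 0 := fun h => by simp [h] at hb3
          intro i
          fin_cases i
          exacts [hb0, one_ne_zero, inv_ne_zero hb0, one_ne_zero, one_ne_zero, one_ne_zero]) })
    (p : Submodule k (Fin 6 → k))
    (hp : ∀ g ∈ K, ∀ v ∈ p, (g : Matrix (Fin 6) (Fin 6) k).mulVec v ∈ p) :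
    p = ⊥ ∨ p = ⊤ := by
  subst hK
  have htwo : (2 : k) = 0 := by
    have := CharP.cast_eq_zero k 2
    exact_mod_cast this
  have hb0 : b ≠ 0 := fun h => by simp [h] at hb3
  have hbinv : b⁻¹ = b ^ 2 :=
    inv_eq_of_mul_eq_one_right (by linear_combination hb3)
  have hsum : b ^ 2 + b + 1 = 0 := by
    have h : (b - 1) * (b ^ 2 + b + 1) = 0 := by linear_combination hb3
    rcases mul_eq_zero.mp h with h' | h'
    · exact absurd (sub_eq_zero.mp h') hb1
    · exact h'
  -- invariance under the generators
  have key : ∀ g ∈ ({ permGL k (c[(0 : Fin 6), 3] * c[(1 : Fin 6), 2] * c[(4 : Fin 6), 5]),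
        permGL k (c[(0 : Fin 6), 2, 4] * c[(1 : Fin 6), 3, 5]),
        permGL k (c[(1 : Fin 6), 3, 5]),
        diagGL k ![b, 1, b⁻¹, 1, 1, 1] (by
          intro i
          fin_cases i
          exacts [hb0, one_ne_zero, inv_ne_zero hb0, one_ne_zero, one_ne_zero, one_ne_zero]) } :
        Set (Matrix.GeneralLinearGroup (Fin 6) k)),
      ∀ v ∈ p, (g : Matrix (Fin 6) (Fin 6) k).mulVec v ∈ p :=
    fun g hg => hp g (Subgroup.subset_closure hg)
  have mσ := key _ (Set.mem_insert _ _)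
  have mτ := key _ (Set.mem_insert_of_mem _ (Set.mem_insert _ _))
  have mρ := key _ (Set.mem_insert_of_mem _ (Set.mem_insert_of_mem _ (Set.mem_insert _ _)))
  have mD := key _ (Set.mem_insert_of_mem _ (Set.mem_insert_of_mem _ (Set.mem_insert_of_mem _ rfl)))
  -- the actions of the generators on vectors
  have hσa : ∀ v ∈ p, (![v 3, v 2, v 1, v 0, v 5, v 4] : Fin 6 → k) ∈ p := by
    intro v hv
    have h := mσ v hv
    rw [permGL_mulVec] at h
    have e : (fun i : Fin 6 => v ((c[(0 : Fin 6), 3] * c[(1 : Fin 6), 2] * c[(4 : Fin 6), 5]) i))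
        = ![v 3, v 2, v 1, v 0, v 5, v 4] := by
      funext i
      fin_cases i <;> exact congrArg v (by decide)
    rwa [e] at h
  have hτa : ∀ v ∈ p, (![v 2, v 3, v 4, v 5, v 0, v 1] : Fin 6 → k) ∈ p := by
    intro v hv
    have h := mτ v hv
    rw [permGL_mulVec] at h
    have e : (fun i : Fin 6 => v ((c[(0 : Fin 6), 2, 4] * c[(1 : Fin 6), 3, 5]) i))
        = ![v 2, v 3, v 4, v 5, v 0, v 1] := by
      funext i
      fin_cases i <;> exact congrArg v (by decide)
    rwa [e] at h
  have hρa : ∀ v ∈ p, (![v 0, v 3, v 2, v 5, v 4, v 1] : Fin 6 → k) ∈ p := by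
    intro v hv
    have h := mρ v hv
    rw [permGL_mulVec] at h
    have e : (fun i : Fin 6 => v ((c[(1 : Fin 6), 3, 5]) i))
        = ![v 0, v 3, v 2, v 5, v 4, v 1] := by
      funext i
      fin_cases i <;> exact congrArg v (by decide)
    rwa [e] at h
  have hDa : ∀ v ∈ p, (![b * v 0, v 1, b⁻¹ * v 2, v 3, v 4, v 5] : Fin 6 → k) ∈ p := by
    intro v hv
    have h := mD v hv
    rw [diagGL_mulVec] at h
    have e : (fun i : Fin 6 => (![b, 1, b⁻¹, 1, 1, 1] : Fin 6 → k) i * v i)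
        = ![b * v 0, v 1, b⁻¹ * v 2, v 3, v 4, v 5] := by
      funext i
      fin_cases i
      · rfl
      · exact one_mul _
      · rfl
      · exact one_mul _
      · exact one_mul _
      · exact one_mul _
    rwa [e] at h
  -- projection onto coordinate 0
  have hproj : ∀ v ∈ p, (![v 0, 0, 0, 0, 0, 0] : Fin 6 → k) ∈ p := by
    intro v hv
    have h1 := hDa v hv
    have h2 : (![b * (b * v 0), v 1, b⁻¹ * (b⁻¹ * v 2), v 3, v 4, v 5] : Fin 6 → k) ∈ p :=
      hDa _ h1
    have hmem := p.add_mem (p.add_mem hv (p.smul_mem (b ^ 2) h1)) (p.smul_mem b h2)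
    have e : (![v 0, 0, 0, 0, 0, 0] : Fin 6 → k)
        = v + b ^ 2 • ![b * v 0, v 1, b⁻¹ * v 2, v 3, v 4, v 5]
          + b • ![b * (b * v 0), v 1, b⁻¹ * (b⁻¹ * v 2), v 3, v 4, v 5] := by
      funext i
      fin_cases i
      · show v 0 = v 0 + b ^ 2 * (b * v 0) + b * (b * (b * v 0))
        linear_combination (-2 * v 0) * hb3 - v 0 * htwo
      · show (0 : k) = v 1 + b ^ 2 * v 1 + b * v 1
        linear_combination (-(v 1)) * hsum
      · show (0 : k) = v 2 + b ^ 2 * (b⁻¹ * v 2) + b * (b⁻¹ * (b⁻¹ * v 2))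
        rw [hbinv]
        linear_combination (-(v 2) * (b + b ^ 2)) * hb3 - v 2 * hsum
      · show (0 : k) = v 3 + b ^ 2 * v 3 + b * v 3
        linear_combination (-(v 3)) * hsum
      · show (0 : k) = v 4 + b ^ 2 * v 4 + b * v 4
        linear_combination (-(v 4)) * hsum
      · show (0 : k) = v 5 + b ^ 2 * v 5 + b * v 5
        linear_combination (-(v 5)) * hsum
    rw [e]
    exact hmem
  rcases eq_or_ne p ⊥ with hbot | hbot
  · exact Or.inl hbot
  right
  obtain ⟨v, hv, hvne⟩ := (Submodule.ne_bot_iff p).mp hbot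
  obtain ⟨i, hvi⟩ : ∃ i, v i ≠ 0 := by
    by_contra h
    push_neg at h
    exact hvne (funext h)
  have hc : ∃ c : k, c ≠ 0 ∧ (![c, 0, 0, 0, 0, 0] : Fin 6 → k) ∈ p := by
    fin_cases i
    · exact ⟨v 0, hvi, hproj v hv⟩
    · exact ⟨v 1, hvi, hproj _ (hσa _ (hρa _ (hρa v hv)))⟩
    · exact ⟨v 2, hvi, hproj _ (hτa v hv)⟩
    · exact ⟨v 3, hvi, hproj _ (hσa v hv)⟩
    · exact ⟨v 4, hvi, hproj _ (hτa _ (hτa v hv))⟩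
    · exact ⟨v 5, hvi, hproj _ (hσa _ (hτa v hv))⟩
  obtain ⟨c, hc0, hcmem⟩ := hc
  have he0 : (![1, 0, 0, 0, 0, 0] : Fin 6 → k) ∈ p := by
    have h := p.smul_mem c⁻¹ hcmem
    have e : c⁻¹ • (![c, 0, 0, 0, 0, 0] : Fin 6 → k) = ![1, 0, 0, 0, 0, 0] := by
      funext j
      fin_cases j
      · exact inv_mul_cancel₀ hc0
      · exact mul_zero _
      · exact mul_zero _
      · exact mul_zero _
      · exact mul_zero _
      · exact mul_zero _
    rwa [e] at h
  have he3 : (![0, 0, 0, 1, 0, 0] : Fin 6 → k) ∈ p := hσa _ he0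
  have he4 : (![0, 0, 0, 0, 1, 0] : Fin 6 → k) ∈ p := hτa _ he0
  have he2 : (![0, 0, 1, 0, 0, 0] : Fin 6 → k) ∈ p := hτa _ he4
  have he1 : (![0, 1, 0, 0, 0, 0] : Fin 6 → k) ∈ p := hρa _ he3
  have he5 : (![0, 0, 0, 0, 0, 1] : Fin 6 → k) ∈ p := hρa _ he1
  rw [Submodule.eq_top_iff']
  intro w
  have e : w = w 0 • ![1, 0, 0, 0, 0, 0] + w 1 • ![0, 1, 0, 0, 0, 0] + w 2 • ![0, 0, 1, 0, 0, 0]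
      + w 3 • ![0, 0, 0, 1, 0, 0] + w 4 • ![0, 0, 0, 0, 1, 0] + w 5 • ![0, 0, 0, 0, 0, 1] := by
    funext j
    fin_cases j
    · show w 0 = w 0 * 1 + w 1 * 0 + w 2 * 0 + w 3 * 0 + w 4 * 0 + w 5 * 0; ring
    · show w 1 = w 0 * 0 + w 1 * 1 + w 2 * 0 + w 3 * 0 + w 4 * 0 + w 5 * 0; ring
    · show w 2 = w 0 * 0 + w 1 * 0 + w 2 * 1 + w 3 * 0 + w 4 * 0 + w 5 * 0; ring
    · show w 3 = w 0 * 0 + w 1 * 0 + w 2 * 0 + w 3 * 1 + w 4 * 0 + w 5 * 0; ring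
    · show w 4 = w 0 * 0 + w 1 * 0 + w 2 * 0 + w 3 * 0 + w 4 * 1 + w 5 * 0; ring
    · show w 5 = w 0 * 0 + w 1 * 0 + w 2 * 0 + w 3 * 0 + w 4 * 0 + w 5 * 1; ring
  rw [e]
  exact p.add_mem (p.add_mem (p.add_mem (p.add_mem (p.add_mem (p.smul_mem _ he0)
    (p.smul_mem _ he1)) (p.smul_mem _ he2)) (p.smul_mem _ he3)) (p.smul_mem _ he4))
    (p.smul_mem _ he5)
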